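/- Let A = (Q, Σ, S, Δ, F) be a nondeterministic finite automaton with finite state set Q, set of initial states S, transition function Δ : Q → Σ → Set Q, and set of accepting states F. Then the finite-word language L_*(A) is NOT slender if and only if there exist states q, p₁, p₂ ∈ Q and f₁, f₂ ∈ F such that: (1) there exist w₀ ∈ Σ* and a nonempty word w ∈ Σ⁺ such that q is reachable from some initial state by a run on w₀ and q is reachable from q by a run on w; (2) there exist nonempty words u₁, u₂ ∈ Σ⁺ and an index i < min(|u₁|,|u₂|) with u₁[i] ≠ u₂[i], such that p₁ is reachable from q by a run on u₁ and p₂ is reachable from q by a run on u₂; and (3) there exist nonempty words w₁, w₂ ∈ Σ⁺ and words v₁, v₂ ∈ Σ* such that p₁ is reachable from p₁ by a run on w₁ and f₁ is reachable from p₁ by a run on v₁, and p₂ is reachable from p₂ by a run on w₂ and f₂ is reachable from p₂ by a run on v₂. -/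

import Mathlib

/-- A language is slender if there is a uniform bound `k` on the number of its words
of any given length. -/
def Slender {σ : Type*} (L : Set (List σ)) : Prop :=
  ∃ k : ℕ, ∀ ℓ : ℕ, {w ∈ L | w.length = ℓ}.Finite ∧ {w ∈ L | w.length = ℓ}.ncard ≤ k


open List
section Helpers

variable {α Q : Type*} (M : NFA α Q)

private lemma nfa_stepSet_mono {S T : Set Q} (h : S ⊆ T) (a : α) :
    M.stepSet S a ⊆ M.stepSet T a := by
  intro x hx
  rw [NFA.mem_stepSet] at hx ⊢
  obtain ⟨t, ht, hx⟩ := hx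
  exact ⟨t, h ht, hx⟩

private lemma nfa_evalFrom_mono {S T : Set Q} (h : S ⊆ T) (x : List α) :
    M.evalFrom S x ⊆ M.evalFrom T x := by
  induction x generalizing S T with
  | nil => simpa using h
  | cons a x ih => exact ih (nfa_stepSet_mono M h a)

private lemma nfa_evalFrom_append (S : Set Q) (x y : List α) :
    M.evalFrom S (x ++ y) = M.evalFrom (M.evalFrom S x) y :=
  List.foldl_append

private lemma nfa_trans {S : Set Q} {q p : Q} {x y : List α}
    (hq : q ∈ M.evalFrom S x) (hp : p ∈ M.evalFrom {q} y) :
    p ∈ M.evalFrom S (x ++ y) := by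
  rw [nfa_evalFrom_append]
  exact nfa_evalFrom_mono M (by simpa using hq) y hp

/-- n-fold repetition of a word -/
private def lpow (w : List α) (n : ℕ) : List α := (List.replicate n w).flatten

private lemma lpow_length (w : List α) (n : ℕ) : (lpow w n).length = n * w.length := by
  simp [lpow]

private lemma lpow_succ (w : List α) (n : ℕ) : lpow w (n + 1) = w ++ lpow w n := by
  rw [lpow, lpow, List.replicate_succ, List.flatten_cons]

private lemma lpow_add (w : List α) (m n : ℕ) : lpow w (m + n) = lpow w m ++ lpow w n := by
  rw [lpow, lpow, lpow, List.replicate_add, List.flatten_append]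

private lemma lpow_one (w : List α) : lpow w 1 = w := by simp [lpow]

private lemma nfa_lpow_cycle {q : Q} {w : List α} (hq : q ∈ M.evalFrom {q} w) (n : ℕ) :
    q ∈ M.evalFrom {q} (lpow w n) := by
  induction n with
  | zero => simp [lpow]
  | succ n ih => rw [lpow_succ]; exact nfa_trans M hq ih

/-- If `a ++ (x ++ t) = a ++ (y ++ s)` then `x` and `y` agree on common positions. -/
private lemma append_mid_eq {a x y t s : List α}
    (h : a ++ (x ++ t) = a ++ (y ++ s)) {i : ℕ} (hx : i < x.length) (hy : i < y.length) :
    x[i] = y[i] := by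
  have he : a.length + i - a.length = i := by omega
  have hL : (a ++ (x ++ t))[a.length + i]? = some (x[i]'hx) := by
    rw [List.getElem?_append_right (by omega), he, List.getElem?_append_left hx,
      List.getElem?_eq_getElem hx]
  have hR : (a ++ (y ++ s))[a.length + i]? = some (y[i]'hy) := by
    rw [List.getElem?_append_right (by omega), he, List.getElem?_append_left hy,
      List.getElem?_eq_getElem hy]
  have h' := congrArg (fun l => l[a.length + i]?) h
  rw [hL, hR] at h'
  exact Option.some_injective _ h'

private lemma nfa_exists_run {S : Set Q} {p : Q} {u : List α} (h : p ∈ M.evalFrom S u) :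
    ∃ r : ℕ → Q, r 0 ∈ S ∧ r u.length = p ∧
      ∀ t (ht : t < u.length), r (t + 1) ∈ M.step (r t) (u[t]'ht) := by
  induction u using List.reverseRecOn generalizing p with
  | nil =>
    exact ⟨fun _ => p, h, rfl, by simp⟩
  | append_singleton xs a ih =>
    rw [NFA.evalFrom_append, NFA.evalFrom_singleton, NFA.mem_stepSet] at h
    obtain ⟨s, hs, hp⟩ := h
    obtain ⟨r, hr0, hrl, hrs⟩ := ih hs
    refine ⟨Function.update r (xs.length + 1) p, ?_, ?_, ?_⟩
    · rw [Function.update_of_ne (by omega)]; exact hr0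
    · have hl : (xs ++ [a]).length = xs.length + 1 := by simp
      rw [hl, Function.update_self]
    · intro t ht
      simp only [List.length_append, List.length_singleton] at ht
      rcases Nat.lt_or_ge t xs.length with h' | h'
      · rw [Function.update_of_ne (by omega), Function.update_of_ne (by omega),
          List.getElem_append_left h']
        exact hrs t h'
      · have hte : t = xs.length := by omega
        subst hte
        rw [Function.update_self, Function.update_of_ne (by omega), hrl]
        have : (xs ++ [a])[xs.length]'(by simp) = a := by simp
        rw [this]
        exact hp

private lemma nfa_run_segment {u : List α} {r : ℕ → Q}
    (hr : ∀ t (ht : t < u.length), r (t + 1) ∈ M.step (r t) (u[t]'ht)) :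
    ∀ a b, a ≤ b → b ≤ u.length → r b ∈ M.evalFrom {r a} ((u.take b).drop a) := by
  intro a b hab hbl
  induction b with
  | zero =>
    have : a = 0 := by omega
    subst this
    simp
  | succ b ih =>
    rcases Nat.lt_or_ge a (b + 1) with h' | h'
    · have hab' : a ≤ b := by omega
      have hbl' : b ≤ u.length := by omega
      have hblt : b < u.length := by omega
      have h1 : (u.take (b + 1)).drop a = (u.take b).drop a ++ [u[b]'hblt] := by
        rw [List.take_succ]
        rw [List.drop_append_of_le_length (by simp; omega)]
        congr 1
        simp [List.getElem?_eq_getElem hblt]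
      rw [h1, NFA.evalFrom_append, NFA.evalFrom_singleton, NFA.mem_stepSet]
      exact ⟨r b, ih hab' hbl', hr b hblt⟩
    · have : a = b + 1 := by omega
      subst this
      rw [List.drop_eq_nil_of_le (by simp)]
      simp

end Helpers

section MainProof

variable {α Q : Type*} [Fintype α] [Fintype Q] (M : NFA α Q)

/-- The backward direction: the branching-cycles structure implies non-slenderness. -/
private lemma backward_dir
    (hyp : ∃ q p₁ p₂ f₁ f₂ : Q, f₁ ∈ M.accept ∧ f₂ ∈ M.accept ∧
      (∃ (w₀ w : List α), w ≠ [] ∧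
        q ∈ M.evalFrom M.start w₀ ∧ q ∈ M.evalFrom {q} w) ∧
      (∃ (u₁ u₂ : List α), u₁ ≠ [] ∧ u₂ ≠ [] ∧
        (∃ (i : ℕ) (h₁ : i < u₁.length) (h₂ : i < u₂.length),
          u₁.get ⟨i, h₁⟩ ≠ u₂.get ⟨i, h₂⟩) ∧
        p₁ ∈ M.evalFrom {q} u₁ ∧ p₂ ∈ M.evalFrom {q} u₂) ∧
      (∃ (w₁ w₂ v₁ v₂ : List α), w₁ ≠ [] ∧ w₂ ≠ [] ∧
        p₁ ∈ M.evalFrom {p₁} w₁ ∧ f₁ ∈ M.evalFrom {p₁} v₁ ∧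
        p₂ ∈ M.evalFrom {p₂} w₂ ∧ f₂ ∈ M.evalFrom {p₂} v₂)) :
    ¬ Slender {w : List α | w ∈ M.accepts} := by
  obtain ⟨q, p₁, p₂, f₁, f₂, hf₁, hf₂, ⟨w₀, w, hw, hq0, hqc⟩,
    ⟨u₁, u₂, hu₁, hu₂, ⟨i, h₁, h₂, hne⟩, hp₁, hp₂⟩,
    ⟨w₁, w₂, v₁, v₂, hw₁, hw₂, hc₁, hv₁, hc₂, hv₂⟩⟩ := hyp
  rintro ⟨k, hk⟩
  have hwpos : 0 < w.length := List.length_pos_iff.mpr hw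
  have hw1pos : 0 < w₁.length := List.length_pos_iff.mpr hw₁
  have hw2pos : 0 < w₂.length := List.length_pos_iff.mpr hw₂
  -- common cycle length C
  set W : List α := lpow w ((i + 1) * (w₁.length * w₂.length)) with hWdef
  set W₁ : List α := lpow w₁ ((i + 1) * (w.length * w₂.length)) with hW1def
  set W₂ : List α := lpow w₂ ((i + 1) * (w.length * w₁.length)) with hW2def
  set C : ℕ := (i + 1) * (w.length * (w₁.length * w₂.length)) with hCdef
  have hWlen : W.length = C := by rw [hWdef, lpow_length, hCdef]; ring
  have hW1len : W₁.length = C := by rw [hW1def, lpow_length, hCdef]; ring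
  have hW2len : W₂.length = C := by rw [hW2def, lpow_length, hCdef]; ring
  have hiC : i < C := by
    have : i + 1 ≤ C := by
      calc i + 1 = (i + 1) * (1 * (1 * 1)) := by ring
        _ ≤ C := by
          rw [hCdef]
          exact Nat.mul_le_mul_left _ (Nat.mul_le_mul hwpos (Nat.mul_le_mul hw1pos hw2pos))
    omega
  have hWc : q ∈ M.evalFrom {q} W := nfa_lpow_cycle M hqc _
  have hW1c : p₁ ∈ M.evalFrom {p₁} W₁ := nfa_lpow_cycle M hc₁ _
  have hW2c : p₂ ∈ M.evalFrom {p₂} W₂ := nfa_lpow_cycle M hc₂ _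
  set K : ℕ := k * k with hKdef
  set Z : ℕ → List α := fun j => w₀ ++ (lpow W j ++ (u₁ ++ (lpow W₁ (K - j) ++ v₁))) with hZdef
  set Z' : ℕ → List α := fun j => w₀ ++ (lpow W j ++ (u₂ ++ (lpow W₂ (K - j) ++ v₂))) with hZ'def
  have hZacc : ∀ j, Z j ∈ M.accepts := by
    intro j
    rw [NFA.mem_accepts]
    exact ⟨f₁, hf₁, nfa_trans M hq0 (nfa_trans M (nfa_lpow_cycle M hWc j)
      (nfa_trans M hp₁ (nfa_trans M (nfa_lpow_cycle M hW1c (K - j)) hv₁)))⟩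
  have hZ'acc : ∀ j, Z' j ∈ M.accepts := by
    intro j
    rw [NFA.mem_accepts]
    exact ⟨f₂, hf₂, nfa_trans M hq0 (nfa_trans M (nfa_lpow_cycle M hWc j)
      (nfa_trans M hp₂ (nfa_trans M (nfa_lpow_cycle M hW2c (K - j)) hv₂)))⟩
  have hsum : ∀ j, j ≤ K → j * C + (K - j) * C = K * C := by
    intro j hj
    rw [← Nat.add_mul]
    congr 1
    omega
  have hZlen : ∀ j, j ≤ K → (Z j).length = w₀.length + (K * C + (u₁.length + v₁.length)) := by
    intro j hj
    simp only [hZdef, List.length_append, lpow_length, hWlen, hW1len]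
    have := hsum j hj
    omega
  have hZ'len : ∀ j, j ≤ K → (Z' j).length = w₀.length + (K * C + (u₂.length + v₂.length)) := by
    intro j hj
    simp only [hZ'def, List.length_append, lpow_length, hWlen, hW2len]
    have := hsum j hj
    omega
  set L₁ : ℕ := w₀.length + (K * C + (u₁.length + v₁.length)) with hL1
  set L₂ : ℕ := w₀.length + (K * C + (u₂.length + v₂.length)) with hL2
  obtain ⟨hfin₁, hcard₁⟩ := hk L₁
  obtain ⟨hfin₂, hcard₂⟩ := hk L₂
  -- pigeonhole
  have hmaps : ∀ j ∈ Finset.range (K + 1),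
      (Z j, Z' j) ∈ hfin₁.toFinset ×ˢ hfin₂.toFinset := by
    intro j hj
    rw [Finset.mem_range] at hj
    rw [Finset.mem_product, Set.Finite.mem_toFinset, Set.Finite.mem_toFinset]
    exact ⟨⟨hZacc j, hZlen j (by omega)⟩, ⟨hZ'acc j, hZ'len j (by omega)⟩⟩
  have hcardlt : (hfin₁.toFinset ×ˢ hfin₂.toFinset).card < (Finset.range (K + 1)).card := by
    rw [Finset.card_product, Finset.card_range]
    have e1 : hfin₁.toFinset.card ≤ k := by
      rw [← Set.ncard_eq_toFinset_card _ hfin₁]; exact hcard₁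
    have e2 : hfin₂.toFinset.card ≤ k := by
      rw [← Set.ncard_eq_toFinset_card _ hfin₂]; exact hcard₂
    calc hfin₁.toFinset.card * hfin₂.toFinset.card ≤ k * k := Nat.mul_le_mul e1 e2
      _ < K + 1 := by omega
  obtain ⟨j, hj, l, hl, hjl, heq⟩ :=
    Finset.exists_ne_map_eq_of_card_lt_of_maps_to hcardlt hmaps
  rw [Prod.mk.injEq] at heq
  obtain ⟨heqZ, heqZ'⟩ := heq
  rw [Finset.mem_range] at hj hl
  -- wlog j < l
  have key : ∀ a b, a < b → b ≤ K → Z a = Z b → Z' a = Z' b → False := by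
    intro a b hab hbK hZab hZ'ab
    have hsplit : lpow W b = lpow W a ++ (W ++ lpow W (b - a - 1)) := by
      calc lpow W b = lpow W (a + (1 + (b - a - 1))) := by congr 1; omega
        _ = lpow W a ++ (W ++ lpow W (b - a - 1)) := by rw [lpow_add, lpow_add, lpow_one]
    have hZb : Z b = (w₀ ++ lpow W a) ++ (W ++ (lpow W (b - a - 1) ++ (u₁ ++ (lpow W₁ (K - b) ++ v₁)))) := by
      simp only [hZdef, hsplit, List.append_assoc]
    have hZa : Z a = (w₀ ++ lpow W a) ++ (u₁ ++ (lpow W₁ (K - a) ++ v₁)) := by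
      simp only [hZdef, List.append_assoc]
    have hZ'b : Z' b = (w₀ ++ lpow W a) ++ (W ++ (lpow W (b - a - 1) ++ (u₂ ++ (lpow W₂ (K - b) ++ v₂)))) := by
      simp only [hZ'def, hsplit, List.append_assoc]
    have hZ'a : Z' a = (w₀ ++ lpow W a) ++ (u₂ ++ (lpow W₂ (K - a) ++ v₂)) := by
      simp only [hZ'def, List.append_assoc]
    have hiW : i < W.length := by omega
    have e1 : u₁[i]'h₁ = W[i]'hiW := by
      apply append_mid_eq (a := w₀ ++ lpow W a)
      · rw [← hZa, ← hZb]; exact hZab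
    have e2 : u₂[i]'h₂ = W[i]'hiW := by
      apply append_mid_eq (a := w₀ ++ lpow W a)
      · rw [← hZ'a, ← hZ'b]; exact hZ'ab
    exact hne (by rw [List.get_eq_getElem, List.get_eq_getElem, e1, e2])
  rcases Nat.lt_or_ge j l with h' | h'
  · exact key j l h' (by omega) heqZ heqZ'
  · have h'' : l < j := by omega
    exact key l j h'' (by omega) heqZ.symm heqZ'.symm

end MainProof


section Fwd
variable {α Q : Type*} [Fintype α] [Fintype Q] (M : NFA α Q)

private lemma forward_dir
    (H : ¬ ∃ q p₁ p₂ f₁ f₂ : Q, f₁ ∈ M.accept ∧ f₂ ∈ M.accept ∧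
      (∃ (w₀ w : List α), w ≠ [] ∧
        q ∈ M.evalFrom M.start w₀ ∧ q ∈ M.evalFrom {q} w) ∧
      (∃ (u₁ u₂ : List α), u₁ ≠ [] ∧ u₂ ≠ [] ∧
        (∃ (i : ℕ) (h₁ : i < u₁.length) (h₂ : i < u₂.length),
          u₁.get ⟨i, h₁⟩ ≠ u₂.get ⟨i, h₂⟩) ∧
        p₁ ∈ M.evalFrom {q} u₁ ∧ p₂ ∈ M.evalFrom {q} u₂) ∧
      (∃ (w₁ w₂ v₁ v₂ : List α), w₁ ≠ [] ∧ w₂ ≠ [] ∧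
        p₁ ∈ M.evalFrom {p₁} w₁ ∧ f₁ ∈ M.evalFrom {p₁} v₁ ∧
        p₂ ∈ M.evalFrom {p₂} w₂ ∧ f₂ ∈ M.evalFrom {p₂} v₂)) :
    Slender {w : List α | w ∈ M.accepts} := by
  classical
  set n : ℕ := Fintype.card Q with hn
  set N : ℕ := 2 * n + 2 with hN
  let T := (Fin N → Option α) × Option Q × (Fin N → Option α)
  let enc : List α → (Fin N → Option α) := fun l i => l[(i : ℕ)]?
  have enc_inj : ∀ x y : List α, x.length ≤ N → y.length ≤ N → enc x = enc y → x = y := by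
    intro x y hx hy hxy
    apply List.ext_getElem?
    intro t
    rcases Nat.lt_or_ge t N with ht | ht
    · exact congrFun hxy ⟨t, ht⟩
    · rw [List.getElem?_eq_none (by omega), List.getElem?_eq_none (by omega)]
  refine ⟨Fintype.card T, fun ℓ => ?_⟩
  set S : Set (List α) := {w ∈ {w : List α | w ∈ M.accepts} | w.length = ℓ} with hS
  suffices hinj : ∃ f : S → T, Function.Injective f by
    obtain ⟨f, hf⟩ := hinj
    have hfin : Finite S := Finite.of_injective f hf
    refine ⟨Set.finite_coe_iff.mp hfin, ?_⟩
    rw [← Nat.card_coe_set_eq]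
    calc Nat.card S ≤ Nat.card T := Nat.card_le_card_of_injective f hf
      _ = Fintype.card T := Nat.card_eq_fintype_card
  by_cases hℓ : ℓ < N
  · refine ⟨fun x => (enc x.1, none, enc []), fun x y hxy => ?_⟩
    apply Subtype.ext
    have h1 := congrArg Prod.fst hxy
    simp only at h1
    exact enc_inj _ _ (by have := x.2.2; omega) (by have := y.2.2; omega) h1
  · push_neg at hℓ
    set Spec : List α → T → Prop := fun u t =>
      ∃ x m y q p, u = x ++ (m ++ y) ∧ t = (enc x, some q, enc y) ∧
        x.length ≤ N ∧ y.length ≤ N ∧ m ≠ [] ∧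
        q ∈ M.evalFrom M.start x ∧ (∃ c, c ≠ [] ∧ q ∈ M.evalFrom {q} c) ∧
        p ∈ M.evalFrom {q} m ∧ (∃ c, c ≠ [] ∧ p ∈ M.evalFrom {p} c) ∧
        (∃ v f, f ∈ M.accept ∧ f ∈ M.evalFrom {p} v) with hSpec
    have hex : ∀ u : S, ∃ t, Spec u.1 t := by
      rintro ⟨u, huacc, hulen⟩
      simp only [Set.mem_setOf_eq] at huacc hulen
      obtain ⟨fst, hfacc, hfev⟩ := huacc
      obtain ⟨r, hr0, hrend, hrs⟩ := nfa_exists_run M hfev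
      -- first repeat within the first n+1 states
      obtain ⟨a, b, hab, hbn, hrab⟩ : ∃ a b : ℕ, a < b ∧ b ≤ n ∧ r a = r b := by
        obtain ⟨a', b', hne', heq'⟩ := Fintype.exists_ne_map_eq_of_card_lt
          (fun t : Fin (n + 1) => r t) (by simp [hn])
        rcases Nat.lt_or_ge a'.val b'.val with h' | h'
        · exact ⟨a'.val, b'.val, h', by omega, heq'⟩
        · have : b'.val < a'.val := by
            rcases Nat.lt_or_ge b'.val a'.val with h'' | h''
            · exact h''
            · exact absurd (Fin.ext (by omega)) hne'
          exact ⟨b'.val, a'.val, this, by omega, heq'.symm⟩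
      -- repeat within the last n+1 states
      obtain ⟨c, d, hcd, hdl, hcge, hrcd⟩ :
          ∃ c d : ℕ, c < d ∧ d ≤ ℓ ∧ ℓ - n ≤ c ∧ r c = r d := by
        obtain ⟨a', b', hne', heq'⟩ := Fintype.exists_ne_map_eq_of_card_lt
          (fun t : Fin (n + 1) => r (ℓ - n + t)) (by simp [hn])
        rcases Nat.lt_or_ge a'.val b'.val with h' | h'
        · exact ⟨ℓ - n + a'.val, ℓ - n + b'.val, by omega,
            by have := b'.isLt; omega, by omega, heq'⟩
        · have h'' : b'.val < a'.val := by
            rcases Nat.lt_or_ge b'.val a'.val with h'' | h''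
            · exact h''
            · exact absurd (Fin.ext (by omega)) hne'
          exact ⟨ℓ - n + b'.val, ℓ - n + a'.val, by omega,
            by have := a'.isLt; omega, by omega, heq'.symm⟩
      have hac : a < c := by omega
      have hcl : c ≤ ℓ := by omega
      have hul : u.length = ℓ := hulen
      refine ⟨(enc (u.take a), some (r a), enc (u.drop c)),
        u.take a, (u.take c).drop a, u.drop c, r a, r c, ?_, rfl, ?_, ?_, ?_, ?_, ?_, ?_, ?_, ?_⟩
      · -- decomposition
        have hy : u.drop c = (u.drop a).drop (c - a) := by
          rw [List.drop_drop]; congr 1; omega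
        rw [List.drop_take, hy, List.take_append_drop, List.take_append_drop]
      · simp only [List.length_take]; omega
      · simp only [List.length_drop]; omega
      · apply List.ne_nil_of_length_pos
        simp only [List.length_drop, List.length_take]
        omega
      · have := nfa_run_segment M hrs 0 a (by omega) (by omega)
        simp only [List.drop_zero] at this
        exact nfa_evalFrom_mono M (Set.singleton_subset_iff.mpr hr0) _ this
      · refine ⟨(u.take b).drop a, ?_, ?_⟩
        · apply List.ne_nil_of_length_pos
          simp only [List.length_drop, List.length_take]
          omega
        · have := nfa_run_segment M hrs a b (by omega) (by omega)
          rw [hrab] at this ⊢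
          exact this
      · exact nfa_run_segment M hrs a c (by omega) (by omega)
      · refine ⟨(u.take d).drop c, ?_, ?_⟩
        · apply List.ne_nil_of_length_pos
          simp only [List.length_drop, List.length_take]
          omega
        · have := nfa_run_segment M hrs c d (by omega) (by omega)
          rw [hrcd] at this ⊢
          exact this
      · refine ⟨u.drop c, fst, hfacc, ?_⟩
        have := nfa_run_segment M hrs c u.length (by omega) le_rfl
        rw [List.take_length, hrend] at this
        exact this
    have huniq : ∀ (u u' : S) t, Spec u.1 t → Spec u'.1 t → u.1 = u'.1 := by
      rintro ⟨u, hu⟩ ⟨u', hu'⟩ t hsp hsp'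
      obtain ⟨x, m, y, q, p, hdec, ht, hxN, hyN, hmne, hqr, hqcyc, hpm, hpcyc, hpacc⟩ := hsp
      obtain ⟨x', m', y', q', p', hdec', ht', hxN', hyN', hmne', hqr', hqcyc', hpm', hpcyc', hpacc'⟩ := hsp'
      rw [ht] at ht'
      rw [Prod.mk.injEq, Prod.mk.injEq] at ht'
      obtain ⟨hex', hq', hey'⟩ := ht'
      have hx : x = x' := enc_inj _ _ hxN hxN' hex'
      have hyy : y = y' := enc_inj _ _ hyN hyN' hey'
      have hqq : q = q' := Option.some_injective _ hq'
      subst hx; subst hyy; subst hqq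
      have hlen : u.length = u'.length := by
        have h1 : u.length = ℓ := hu.2
        have h2 : u'.length = ℓ := hu'.2
        omega
      have hmlen : m.length = m'.length := by
        have e1 := congrArg List.length hdec
        have e2 := congrArg List.length hdec'
        simp only [List.length_append] at e1 e2
        omega
      have hmm : m = m' := by
        apply List.ext_getElem hmlen
        intro t ht1 ht2
        by_contra hne
        apply H
        obtain ⟨cq, hcqne, hcq⟩ := hqcyc
        obtain ⟨cp, hcpne, hcp⟩ := hpcyc
        obtain ⟨cp', hcpne', hcp'⟩ := hpcyc'
        obtain ⟨v, f, hfacc, hfv⟩ := hpacc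
        obtain ⟨v', f', hfacc', hfv'⟩ := hpacc'
        exact ⟨q, p, p', f, f', hfacc, hfacc',
          ⟨x, cq, hcqne, hqr, hcq⟩,
          ⟨m, m', hmne, hmne', ⟨t, ht1, ht2, hne⟩, hpm, hpm'⟩,
          ⟨cp, cp', v, v', hcpne, hcpne', hcp, hfv, hcp', hfv'⟩⟩
      rw [hdec, hdec', hmm]
    refine ⟨fun u => Classical.choose (hex u), fun u u' h => ?_⟩
    have s1 := Classical.choose_spec (hex u)
    have s2 := Classical.choose_spec (hex u')
    simp only at h
    rw [← h] at s2
    exact Subtype.ext (huniq u u' _ s1 s2)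
end Fwd

/-- characterization of non-slenderness of the language of an NFA.
`L_*(A)` is not slender iff there are a state `q` reachable from an initial state and
lying on a nonempty cycle, two runs from `q` on words `u₁, u₂` differing at some common
position and leading to states `p₁, p₂`, each of which lies on a nonempty cycle and can
reach an accepting state. -/
theorem not_slender_iff_two_branching_cycles
    {α Q : Type*} [Fintype α] [Fintype Q] (M : NFA α Q) :
    ¬ Slender {w : List α | w ∈ M.accepts} ↔
    ∃ q p₁ p₂ f₁ f₂ : Q, f₁ ∈ M.accept ∧ f₂ ∈ M.accept ∧
      (∃ (w₀ w : List α), w ≠ [] ∧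
        q ∈ M.evalFrom M.start w₀ ∧ q ∈ M.evalFrom {q} w) ∧
      (∃ (u₁ u₂ : List α), u₁ ≠ [] ∧ u₂ ≠ [] ∧
        (∃ (i : ℕ) (h₁ : i < u₁.length) (h₂ : i < u₂.length),
          u₁.get ⟨i, h₁⟩ ≠ u₂.get ⟨i, h₂⟩) ∧
        p₁ ∈ M.evalFrom {q} u₁ ∧ p₂ ∈ M.evalFrom {q} u₂) ∧
      (∃ (w₁ w₂ v₁ v₂ : List α), w₁ ≠ [] ∧ w₂ ≠ [] ∧
        p₁ ∈ M.evalFrom {p₁} w₁ ∧ f₁ ∈ M.evalFrom {p₁} v₁ ∧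
        p₂ ∈ M.evalFrom {p₂} w₂ ∧ f₂ ∈ M.evalFrom {p₂} v₂) := by
  constructor
  · intro hns
    by_contra H
    exact hns (forward_dir M H)
  · exact backward_dir M
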